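/- Let h be a positive integer dividing 24. Then the matrix T_h = [[1, 1/h], [0, 1]] normalises Γ₀(h²) inside GL₂(ℚ), i.e., for every matrix γ ∈ Γ₀(h²) we have T_h · γ · T_h⁻¹ ∈ Γ₀(h²). -/

import Mathlib

lemma zmod_mul_eq_one_key (h : ℕ) (hdvd : h ∣ 24) (x y : ZMod h) (hxy : x * y = 1) :
    y = x := by
  have h24 : h ≤ 24 := Nat.le_of_dvd (by norm_num) hdvd
  have h0 : 0 < h := Nat.pos_of_dvd_of_pos hdvd (by norm_num)
  interval_cases h <;>
    first
      | (exfalso; revert hdvd; decide)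
      | (revert hxy; revert x y; decide)

/-- If `h ∣ 24` then `T_h = [[1, 1/h], [0, 1]]` normalises `Γ₀(h²)`:
for every integer matrix `γ` of determinant 1 whose lower-left entry is divisible
by `h²`, the matrix `T_h · γ · T_h⁻¹` is again such a matrix. -/
theorem Th_normalises_Gamma0_sq (h : ℕ) (hpos : 0 < h) (hdvd : h ∣ 24)
    (γ : Matrix (Fin 2) (Fin 2) ℤ) (hdet : γ.det = 1) (hc : ((h : ℤ)) ^ 2 ∣ γ 1 0) :
    ∃ δ : Matrix (Fin 2) (Fin 2) ℤ, δ.det = 1 ∧ ((h : ℤ)) ^ 2 ∣ δ 1 0 ∧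
      (!![1, 1 / (h : ℚ); 0, 1]) * γ.map (Int.cast : ℤ → ℚ) * (!![1, 1 / (h : ℚ); 0, 1])⁻¹
        = δ.map (Int.cast : ℤ → ℚ) := by
  obtain ⟨c', hc'⟩ := hc
  have hdet2 : γ 0 0 * γ 1 1 - γ 0 1 * γ 1 0 = 1 := by
    rw [Matrix.det_fin_two] at hdet; linarith [hdet]
  have hda : (h : ℤ) ∣ γ 1 1 - γ 0 0 := by
    have hc1 : (h : ℤ) ∣ γ 1 0 := ⟨h * c', by rw [hc']; ring⟩
    have had : ((γ 0 0 : ℤ) : ZMod h) * ((γ 1 1 : ℤ) : ZMod h) = 1 := by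
      have heq : ((γ 0 0 * γ 1 1 : ℤ) : ZMod h) = ((1 + γ 0 1 * γ 1 0 : ℤ) : ZMod h) := by
        congr 1; linarith [hdet2]
      have hcz : ((γ 1 0 : ℤ) : ZMod h) = 0 := by
        rwa [ZMod.intCast_zmod_eq_zero_iff_dvd]
      push_cast at heq ⊢
      rw [heq, hcz]; ring
    have h1 := zmod_mul_eq_one_key h hdvd _ _ had
    have h2 : ((γ 1 1 - γ 0 0 : ℤ) : ZMod h) = 0 := by push_cast; rw [h1]; ring
    rwa [ZMod.intCast_zmod_eq_zero_iff_dvd] at h2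
  obtain ⟨k, hk⟩ := hda
  refine ⟨!![γ 0 0 + h * c', γ 0 1 + k - c'; γ 1 0, γ 1 1 - h * c'], ?_, ?_, ?_⟩
  · rw [Matrix.det_fin_two_of]
    linear_combination hdet2 + (h : ℤ) * c' * hk + (c' - k) * hc'
  · exact ⟨c', hc'⟩
  · have hT : (!![1, 1 / (h : ℚ); 0, 1])⁻¹ = !![1, -(1 / (h : ℚ)); 0, 1] := by
      rw [Matrix.inv_def, Matrix.adjugate_fin_two, Matrix.det_fin_two_of]
      norm_num
    have hh : (h : ℚ) ≠ 0 := by positivity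
    have hkq : (γ 1 1 : ℚ) - (γ 0 0 : ℚ) = (h : ℚ) * (k : ℚ) := by exact_mod_cast hk
    have hcq : ((γ 1 0 : ℤ) : ℚ) = (h : ℚ) ^ 2 * (c' : ℚ) := by exact_mod_cast hc'
    rw [hT]
    ext i j
    fin_cases i <;> fin_cases j <;>
      simp [Matrix.mul_apply, Matrix.vecMul, dotProduct, Fin.sum_univ_two,
        Matrix.map_apply] <;>
      (try field_simp)
    all_goals (first
      | (linear_combination (h : ℚ) ^ 2 * hkq)
      | (linear_combination hcq)
      | (linear_combination -hcq)
      | (linear_combination -(h : ℚ) * hcq + (h : ℚ) ^ 2 * hkq)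
      | (linear_combination (h : ℚ) * hkq - hcq))
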